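/- Let R be a Noetherian commutative ring and I a nonzero ideal of R such that R is I-adically separated (⋂_{n≥1} Iⁿ = 0). For every R-linear map φ : R̂^I → R from the I-adic completion of R, one has φ ≠ 0 if and only if φ(1) ≠ 0. -/

import Mathlib

universe u

open Submodule TensorProduct

/-- In a Noetherian ring, an element of the `I`-adic completion that vanishes in `R ⧸ Iⁿ`
lies in `Iⁿ • R̂`. -/
private lemma AdicCompletion.mem_smul_top_of_eval_eq_zero {R : Type u} [CommRing R]
    [IsNoetherianRing R] (I : Ideal R) (n : ℕ) (x : AdicCompletion I R)
    (hx : AdicCompletion.eval I R n x = 0) :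
    x ∈ (I ^ n • ⊤ : Submodule R (AdicCompletion I R)) := by
  obtain ⟨a, rfl⟩ := AdicCompletion.mk_surjective I R x
  -- the sequence is eventually in `I ^ n`
  have han : a n ∈ (I ^ n : Ideal R) := by
    have h0 : Submodule.Quotient.mk (p := (I ^ n • ⊤ : Submodule R R)) (a n) = 0 := hx
    rw [Submodule.Quotient.mk_eq_zero] at h0
    simpa only [smul_eq_mul, Ideal.mul_top] using h0
  have hIn : ∀ m, a (n + m) ∈ (I ^ n : Ideal R) := by
    intro m
    have h1 := AdicCompletion.AdicCauchySequence.mk_eq_mk (Nat.le_add_right n m) a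
    rw [Submodule.Quotient.eq] at h1
    have h1' : a (n + m) - a n ∈ (I ^ n : Ideal R) := by
      simpa only [smul_eq_mul, Ideal.mul_top] using h1
    simpa using add_mem h1' han
  -- membership transfer into the module `I ^ n`
  have key : ∀ (m : ℕ) (y : R) (hy : y ∈ I ^ (n + m)) (hy' : y ∈ (I ^ n : Ideal R)),
      (⟨y, hy'⟩ : (I ^ n : Ideal R)) ∈ (I ^ m • ⊤ : Submodule R (I ^ n : Ideal R)) := by
    intro m y hy hy'
    have hmap : Submodule.map (I ^ n : Ideal R).subtype
        (I ^ m • ⊤ : Submodule R (I ^ n : Ideal R)) = (I ^ (n + m) : Ideal R) := by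
      rw [Submodule.map_smul'', Submodule.map_top, Submodule.range_subtype,
        smul_eq_mul, ← pow_add, add_comm]
    rw [← hmap] at hy
    obtain ⟨z, hz, hzy⟩ := hy
    have : z = (⟨y, hy'⟩ : (I ^ n : Ideal R)) := Subtype.ext hzy
    rwa [this] at hz
  -- the shifted sequence is a Cauchy sequence in `I ^ n`
  set c : AdicCompletion.AdicCauchySequence I (↥(I ^ n)) :=
    AdicCompletion.AdicCauchySequence.mk I (↥(I ^ n))
      (fun m ↦ (⟨a (n + m), hIn m⟩ : ↥(I ^ n))) (by
      intro m
      rw [SModEq.sub_mem]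
      have hc := a.property (Nat.le_succ (n + m))
      rw [SModEq.sub_mem] at hc
      have hc' : a (n + m) - a (n + (m + 1)) ∈ I ^ (n + m) := by
        simpa only [smul_eq_mul, Ideal.mul_top, Nat.add_succ] using hc
      exact key m _ hc' _) with hc_def
  have hmapc : AdicCompletion.map I (I ^ n : Ideal R).subtype
      (AdicCompletion.mk I (I ^ n : Ideal R) c) = AdicCompletion.mk I R a := by
    ext k
    simp only [AdicCompletion.map_mk, AdicCompletion.mk_apply_coe,
      AdicCompletion.AdicCauchySequence.map_apply_coe, Submodule.mkQ_apply,
      hc_def, AdicCompletion.AdicCauchySequence.mk_coe, Submodule.coe_subtype]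
    exact AdicCompletion.AdicCauchySequence.mk_eq_mk (Nat.le_add_left k n) a
  -- use surjectivity of ofTensorProduct
  have : Module.Finite R (I ^ n : Ideal R) :=
    Module.Finite.iff_fg.mpr (IsNoetherian.noetherian _)
  obtain ⟨t, ht⟩ := AdicCompletion.ofTensorProduct_surjective_of_finite I
    (I ^ n : Ideal R) (AdicCompletion.mk I (I ^ n : Ideal R) c)
  have hnat := congrArg (fun g ↦ g t)
    (AdicCompletion.ofTensorProduct_naturality I (I ^ n : Ideal R).subtype)
  simp only [LinearMap.coe_comp, Function.comp_apply, ht] at hnat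
  -- so `mk a` is the image of a tensor
  rw [← hmapc, hnat]
  -- every element of this form lies in `I ^ n • ⊤`
  clear hnat ht hmapc hc_def c key hIn han hx a
  induction t using TensorProduct.induction_on with
  | zero => simp
  | tmul r y =>
      rcases y with ⟨y, hy⟩
      rw [TensorProduct.AlgebraTensorModule.map_tmul, LinearMap.id_coe, id_eq,
        Submodule.coe_subtype]
      have h1 : AdicCompletion.of I R y = y • (1 : AdicCompletion I R) := by
        rw [show (1 : AdicCompletion I R) = AdicCompletion.of I R 1 from rfl, ← map_smul,
          smul_eq_mul, mul_one]
      rw [AdicCompletion.ofTensorProduct_tmul, h1]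
      change r * (y • 1) ∈ _
      rw [mul_smul_comm]
      exact Submodule.smul_mem_smul hy Submodule.mem_top
  | add u v hu hv => rw [map_add, map_add]; exact add_mem hu hv

/-- **Nonvanishing at 1 of maps out of the adic completion.**
Let `R` be a Noetherian ring and `I` a nonzero ideal such that `R` is `I`-adically separated
(`⋂_{n ≥ 1} Iⁿ = 0`).  Then an `R`-linear map `φ : R̂^I → R` from the `I`-adic completion is
nonzero if and only if `φ 1 ≠ 0`. -/
theorem adicCompletion_hom_ne_zero_iff_apply_one_ne_zero
    (R : Type u) [CommRing R] [IsNoetherianRing R] (I : Ideal R) (hI : I ≠ ⊥)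
    (hsep : (⨅ n : ℕ, I ^ (n + 1)) = ⊥)
    (φ : AdicCompletion I R →ₗ[R] R) :
    φ ≠ 0 ↔ φ 1 ≠ 0 := by
  constructor
  · intro hφ h1
    apply hφ
    refine LinearMap.ext fun x ↦ ?_
    show φ x = 0
    have hmem : ∀ n : ℕ, φ x ∈ I ^ (n + 1) := by
      intro n
      obtain ⟨r, hr⟩ := Submodule.Quotient.mk_surjective _ (AdicCompletion.eval I R (n + 1) x)
      have h0 : AdicCompletion.eval I R (n + 1) (x - AdicCompletion.of I R r) = 0 := by
        rw [map_sub, AdicCompletion.eval_of]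
        rw [Submodule.mkQ_apply, hr, sub_self]
      have hsm := AdicCompletion.mem_smul_top_of_eval_eq_zero I (n + 1)
        (x - AdicCompletion.of I R r) h0
      have h2 : φ (x - AdicCompletion.of I R r) ∈ (I ^ (n + 1) • ⊤ : Submodule R R) := by
        have hm : φ (x - AdicCompletion.of I R r) ∈
            Submodule.map φ (I ^ (n + 1) • ⊤ : Submodule R (AdicCompletion I R)) :=
          Submodule.mem_map_of_mem hsm
        rw [Submodule.map_smul''] at hm
        exact Submodule.smul_mono le_rfl le_top hm
      have h3 : φ (x - AdicCompletion.of I R r) = φ x := by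
        have hof : AdicCompletion.of I R r = r • (1 : AdicCompletion I R) := by
          rw [show (1 : AdicCompletion I R) = AdicCompletion.of I R 1 from rfl, ← map_smul,
            smul_eq_mul, mul_one]
        rw [map_sub, hof, map_smul, h1, smul_zero, sub_zero]
      rw [h3] at h2
      simpa only [smul_eq_mul, Ideal.mul_top] using h2
    have : φ x ∈ (⨅ n : ℕ, I ^ (n + 1)) := Submodule.mem_iInf _ |>.mpr hmem
    rw [hsep] at this
    simpa using this
  · intro h1 h0
    exact h1 (by rw [h0]; rfl)
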